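/- arXiv:1710.07836 — 2 statements merged into one kernel-verified Lean document; each statement's English description precedes it below -/
import Mathlib

section
/- Let N be a rooted phylogenetic network on X with vertex set V. If the bipartite graph G_N has a matching of size |V| - |X|, then N has a rooted spanning tree with the same root as N whose set of leaves is exactly contained in X (i.e., N is tree-based). -/
open Relation

/-- Out-degree of a vertex in a digraph given by its arc relation. -/
noncomputable def outDeg {V : Type*} (A : V → V → Prop) (v : V) : ℕ := {u | A v u}.ncard
/-- In-degree of a vertex in a digraph given by its arc relation. -/
noncomputable def inDeg {V : Type*} (A : V → V → Prop) (v : V) : ℕ := {u | A u v}.ncard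

/-- A rooted phylogenetic network on leaf set `X`. -/
structure PhyloNet (V : Type*) [Fintype V] [DecidableEq V] where
  Arc : V → V → Prop
  root : V
  X : Finset V
  acyclic : ∀ v, ¬ Relation.TransGen Arc v v
  reach : ∀ v, Relation.ReflTransGen Arc root v
  root_out : 1 ≤ outDeg Arc root
  leaf_iff : ∀ v, v ∈ X ↔ outDeg Arc v = 0
  leaf_in : ∀ v ∈ X, inDeg Arc v = 1
  internal : ∀ v, v ≠ root → v ∉ X →
    (inDeg Arc v = 1 ∧ 2 ≤ outDeg Arc v) ∨ (2 ≤ inDeg Arc v ∧ outDeg Arc v = 1)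

section Defs
variable {V : Type*} [Fintype V] [DecidableEq V]

/-- A reticulation: in-degree at least two. -/
def IsRetic (N : PhyloNet V) (v : V) : Prop := 2 ≤ inDeg N.Arc v
/-- A tree vertex: a non-leaf vertex of in-degree at most one. -/
def IsTreeVert (N : PhyloNet V) (v : V) : Prop := v ∉ N.X ∧ inDeg N.Arc v ≤ 1
/-- An omnian: a non-leaf vertex all of whose children are reticulations. -/
def IsOmnian (N : PhyloNet V) (v : V) : Prop := v ∉ N.X ∧ ∀ u, N.Arc v u → IsRetic N u
/-- A binary network: all in- and out-degrees are at most two. -/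
def IsBinary (N : PhyloNet V) : Prop := ∀ v : V, inDeg N.Arc v ≤ 2 ∧ outDeg N.Arc v ≤ 2

/-- A rooted spanning tree of `N` with the same root as `N`. -/
def IsRSTree (N : PhyloNet V) (T : V → V → Prop) : Prop :=
  (∀ u v, T u v → N.Arc u v) ∧ (∀ v, inDeg T v = 0 ↔ v = N.root) ∧
  (∀ v, v ≠ N.root → inDeg T v = 1)

/-- A support tree: a rooted spanning tree with the same root, all of whose leaves are in `X`. -/
def IsSupportTree (N : PhyloNet V) (T : V → V → Prop) : Prop :=
  IsRSTree N T ∧ ∀ v, outDeg T v = 0 → v ∈ N.X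

/-- Tree-based network. -/
def TreeBased (N : PhyloNet V) : Prop := ∃ T, IsSupportTree N T

/-- A (nonempty, repetition-free) directed path recorded as a list of vertices. -/
def IsPathIn (A : V → V → Prop) (p : List V) : Prop := p ≠ [] ∧ p.Chain' A ∧ p.Nodup
/-- The path ends at a vertex of `X`. -/
def EndsIn (X : Finset V) (p : List V) : Prop := ∃ x ∈ X, p.getLast? = some x
/-- Pairwise vertex-disjoint family of paths. -/
def PairwiseDisj (P : Finset (List V)) : Prop :=
  ∀ p ∈ P, ∀ q ∈ P, p ≠ q → ∀ v : V, v ∈ p → v ∉ q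
/-- A partition of the vertex set of `N` into vertex-disjoint directed paths
ending at leaves in `X`. -/
def IsPathPartition (N : PhyloNet V) (P : Finset (List V)) : Prop :=
  (∀ p ∈ P, IsPathIn N.Arc p ∧ EndsIn N.X p) ∧ PairwiseDisj P ∧ ∀ v : V, ∃ p ∈ P, v ∈ p

/-- A matching in the bipartite graph with edge set `E` (edges from a first copy of `V`
to a second copy of `V`), recorded as a set of edges no two of which share an endpoint. -/
def IsMatchingOn (E : V → V → Prop) (M : Finset (V × V)) : Prop :=
  (∀ e ∈ M, E e.1 e.2) ∧ ∀ e ∈ M, ∀ f ∈ M, (e.1 = f.1 ∨ e.2 = f.2) → e = f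

/-- Size of a maximum matching of the bipartite graph with edge set `E`. -/
noncomputable def maxMatching (E : V → V → Prop) : ℕ :=
  sSup {n | ∃ M : Finset (V × V), IsMatchingOn E M ∧ M.card = n}

/-- An antichain of vertices of `N`. -/
def AntichainIn (N : PhyloNet V) (S : Finset V) : Prop :=
  ∀ u ∈ S, ∀ v ∈ S, u ≠ v → ¬ Relation.TransGen N.Arc u v

/-- The antichain-to-leaf property: from every antichain there are pairwise
vertex-disjoint directed paths to leaves, one starting at each antichain element. -/
def AntichainToLeaf (N : PhyloNet V) : Prop :=
  ∀ S : Finset V, AntichainIn N S →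
    ∃ f : V → List V,
      (∀ s ∈ S, IsPathIn N.Arc (f s) ∧ (f s).head? = some s ∧ EndsIn N.X (f s)) ∧
      ∀ s ∈ S, ∀ t ∈ S, s ≠ t → ∀ v : V, v ∈ f s → v ∉ f t

/-- A temporal network: a real labelling strictly increasing along tree arcs and
constant along reticulation arcs. -/
def Temporal (N : PhyloNet V) : Prop :=
  ∃ l : V → ℝ, ∀ u v, N.Arc u v →
    (IsRetic N v → l u = l v) ∧ (¬ IsRetic N v → l u < l v)

/-- `N'` is a binary refinement of `N`, witnessed by the contraction map `φ`:
`N` is obtained from the binary network `N'` by contracting the arcs whose endpoints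
are identified by `φ`. -/
def IsBinRefinement {V' : Type*} [Fintype V'] [DecidableEq V']
    (N' : PhyloNet V') (N : PhyloNet V) (φ : V' → V) : Prop :=
  IsBinary N' ∧ Function.Surjective φ ∧ φ N'.root = N.root ∧
  N'.X.image φ = N.X ∧ Set.InjOn φ ↑N'.X ∧
  (∀ u v : V, N.Arc u v ↔ ∃ u' v', φ u' = u ∧ φ v' = v ∧ N'.Arc u' v' ∧ φ u' ≠ φ v') ∧
  (∀ a b : V', φ a = φ b →
    Relation.ReflTransGen (fun x y => (N'.Arc x y ∨ N'.Arc y x) ∧ φ x = φ y) a b)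

/-- Edge of the bipartite graph `B_N` between omnians and reticulations. -/
def BEdge (N : PhyloNet V) (o r : V) : Prop := IsOmnian N o ∧ IsRetic N r ∧ N.Arc o r
/-- Edge of the bipartite graph `Z_N` between tree vertices with a reticulation child
and reticulations. -/
def ZEdge (N : PhyloNet V) (t r : V) : Prop :=
  IsTreeVert N t ∧ (∃ r', N.Arc t r' ∧ IsRetic N r') ∧ IsRetic N r ∧ N.Arc t r

/-- `R_t`: reticulations with no reticulation parent. -/
def Rt (N : PhyloNet V) (v : V) : Prop := IsRetic N v ∧ ∀ u, N.Arc u v → ¬ IsRetic N u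
/-- `Q_t`: vertices with a child in `R_t`. -/
def Qt (N : PhyloNet V) (v : V) : Prop := ∃ r, N.Arc v r ∧ Rt N r
/-- Edge of the bipartite graph `J_N`. -/
def JEdge (N : PhyloNet V) (q r : V) : Prop := Qt N q ∧ Rt N r ∧ N.Arc q r

/-- A supporting set for `J_N`. -/
def IsSupportingSet (N : PhyloNet V) (E : Finset (V × V)) : Prop :=
  (∀ e ∈ E, JEdge N e.1 e.2) ∧
  (∀ q, Qt N q → IsOmnian N q → ∃ e ∈ E, e.1 = q) ∧
  (∀ r, Rt N r → ∃! e : V × V, e ∈ E ∧ e.2 = r)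

/-- An arboreal arc: `u` is a reticulation, or `v` is a tree vertex or a leaf. -/
def ArborealArc (N : PhyloNet V) (u v : V) : Prop :=
  N.Arc u v ∧ (IsRetic N u ∨ ¬ IsRetic N v)

/-- The number of support trees of `N`, identified with their arc sets. -/
noncomputable def supCount (N : PhyloNet V) : ℕ :=
  {A' : Finset (V × V) | IsSupportTree N (fun u v => (u, v) ∈ A')}.ncard

/-- The bipartite graph `J_N`, as a simple graph on `Q_t ∪ R_t`. -/
def Jgraph (N : PhyloNet V) : SimpleGraph {v : V // Qt N v ∨ Rt N v} where
  Adj a b := JEdge N a.1 b.1 ∨ JEdge N b.1 a.1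
  symm := ⟨by intro a b h; tauto⟩
  loopless := by
    constructor
    rintro a (⟨_, _, h⟩ | ⟨_, _, h⟩) <;> exact N.acyclic _ (Relation.TransGen.single h)

/-- Degree in `J_N`. -/
noncomputable def Jdeg (N : PhyloNet V) (a : {v : V // Qt N v ∨ Rt N v}) : ℕ :=
  ((Jgraph N).neighborSet a).ncard

end Defs

/-- A rooted tree (equivalently, a subdivision of a rooted tree): a rooted digraph
in which every non-root vertex has in-degree one and everything is reachable
from the root. -/
structure RootedDirTree (V : Type*) [Fintype V] [DecidableEq V] where
  Arc : V → V → Prop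
  root : V
  acyclic : ∀ v, ¬ Relation.TransGen Arc v v
  reach : ∀ v, Relation.ReflTransGen Arc root v
  root_in : inDeg Arc root = 0
  in_one : ∀ v, v ≠ root → inDeg Arc v = 1
/-- a matching of size `|V| - |X|` in `G_N` implies `N` is tree-based. -/
theorem stmt2 {V : Type*} [Fintype V] [DecidableEq V]
    (N : PhyloNet V) (M : Finset (V × V)) (hM : IsMatchingOn N.Arc M)
    (hc : M.card = Fintype.card V - N.X.card) :
    TreeBased N := by
  classical
  -- every non-root vertex has a parent
  have hpar : ∀ v : V, v ≠ N.root → ∃ u, N.Arc u v := by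
    intro v hv
    rcases (N.reach v).cases_tail with h | ⟨c, _, hc'⟩
    · exact absurd h hv
    · exact ⟨c, hc'⟩
  set pick : V → V := fun v => if h : v = N.root then v else Classical.choose (hpar v h)
    with hpick
  have hpick_arc : ∀ v (h : v ≠ N.root), N.Arc (pick v) v := by
    intro v h
    simp only [hpick, dif_neg h]
    exact Classical.choose_spec (hpar v h)
  -- the tree
  set T : V → V → Prop := fun u v =>
    (u, v) ∈ M ∨ (v ≠ N.root ∧ (∀ w, (w, v) ∉ M) ∧ u = pick v) with hT
  -- no arc into root
  have hroot_in : ∀ u, ¬ N.Arc u N.root := by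
    intro u hu
    exact N.acyclic N.root (Relation.TransGen.tail' (N.reach u) hu)
  refine ⟨T, ⟨?_, ?_, ?_⟩, ?_⟩
  · rintro u v (h | ⟨hv, _, rfl⟩)
    · exact hM.1 _ h
    · exact hpick_arc v hv
  · -- inDeg characterization
    intro v
    constructor
    · intro h0
      by_contra hv
      -- inDeg T v = 1 in this case: set nonempty
      have : ({u | T u v} : Set V).Nonempty := by
        by_cases hm : ∃ w, (w, v) ∈ M
        · obtain ⟨w, hw⟩ := hm; exact ⟨w, Or.inl hw⟩
        · exact ⟨pick v, Or.inr ⟨hv, fun w hw => hm ⟨w, hw⟩, rfl⟩⟩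
      rw [inDeg, Set.ncard_eq_zero (Set.toFinite _)] at h0
      exact absurd h0 (Set.nonempty_iff_ne_empty.mp this)
    · rintro rfl
      have : {u | T u N.root} = ∅ := by
        ext u
        simp only [Set.mem_setOf_eq, Set.mem_empty_iff_false, iff_false]
        rintro (h | ⟨hv, _, _⟩)
        · exact hroot_in u (hM.1 _ h)
        · exact hv rfl
      rw [inDeg, this, Set.ncard_empty]
  · intro v hv
    by_cases hm : ∃ w, (w, v) ∈ M
    · obtain ⟨w, hw⟩ := hm
      have : {u | T u v} = {w} := by
        ext u
        simp only [Set.mem_setOf_eq, Set.mem_singleton_iff]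
        constructor
        · rintro (h | ⟨_, habs, _⟩)
          · exact congrArg Prod.fst (hM.2 _ h _ hw (Or.inr rfl))
          · exact absurd hw (habs w)
        · rintro rfl; exact Or.inl hw
      rw [inDeg, this, Set.ncard_singleton]
    · have : {u | T u v} = {pick v} := by
        ext u
        simp only [Set.mem_setOf_eq, Set.mem_singleton_iff]
        constructor
        · rintro (h | ⟨_, _, rfl⟩)
          · exact absurd ⟨u, h⟩ hm
          · rfl
        · rintro rfl; exact Or.inr ⟨hv, fun w hw => hm ⟨w, hw⟩, rfl⟩
      rw [inDeg, this, Set.ncard_singleton]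
  · -- leaves of T are in X
    -- counting: unmatched-out vertices are exactly X
    set S : Finset V := Finset.univ.filter (fun v => ∀ u, (v, u) ∉ M) with hS
    have hSeq : S = Finset.univ \ M.image Prod.fst := by
      ext v
      simp only [hS, Finset.mem_filter, Finset.mem_univ, true_and, Finset.mem_sdiff,
        Finset.mem_image, not_exists]
      constructor
      · intro h; rintro ⟨a, b⟩ ⟨hab, rfl⟩; exact h b hab
      · intro h u hu; exact h (v, u) ⟨hu, rfl⟩
    have hinj : M.card = (M.image Prod.fst).card := by
      rw [Finset.card_image_of_injOn]
      intro e he f hf hef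
      exact hM.2 e he f hf (Or.inl hef)
    have hScard : S.card = N.X.card := by
      rw [hSeq, Finset.card_sdiff_of_subset (Finset.subset_univ _), Finset.card_univ, ← hinj, hc,
        Nat.sub_sub_self (Finset.card_le_univ _)]
    have hXS : N.X ⊆ S := by
      intro v hvX
      simp only [hS, Finset.mem_filter, Finset.mem_univ, true_and]
      intro u hu
      have h0 : outDeg N.Arc v = 0 := (N.leaf_iff v).mp hvX
      rw [outDeg, Set.ncard_eq_zero (Set.toFinite _)] at h0
      have : N.Arc v u := hM.1 _ hu
      exact absurd this (by intro h; exact (Set.eq_empty_iff_forall_notMem.mp h0 u) h)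
    have hXeqS : N.X = S := Finset.eq_of_subset_of_card_le hXS (le_of_eq hScard)
    intro v h0
    rw [outDeg, Set.ncard_eq_zero (Set.toFinite _)] at h0
    rw [hXeqS]
    simp only [hS, Finset.mem_filter, Finset.mem_univ, true_and]
    intro u hu
    exact (Set.eq_empty_iff_forall_notMem.mp h0 u) (Or.inl hu)
end

section
/- There exists a tree-based rooted phylogenetic network N that has a binary refinement which is not tree-based. -/
open Relation

/-! ### Auxiliary constructions for Statement 10 -/

section Stmt10Aux

/-- Acyclicity from a rank function. -/
lemma acyclic_of_rank {V : Type*} (A : V → V → Prop) (f : V → ℕ)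
    (hf : ∀ u v, A u v → f u < f v) : ∀ v, ¬ Relation.TransGen A v v := by
  have key : ∀ u v, Relation.TransGen A u v → f u < f v := by
    intro u v h
    induction h with
    | single h => exact hf _ _ h
    | tail _ h ih => exact ih.trans (hf _ _ h)
  intro v hv
  exact lt_irrefl _ (key v v hv)

/-- Reachability from the root, given a rank function and in-arcs at non-roots. -/
lemma reach_of_rank {V : Type*} (A : V → V → Prop) (root : V) (f : V → ℕ)
    (hf : ∀ u v, A u v → f u < f v) (hp : ∀ v, v ≠ root → ∃ u, A u v) :
    ∀ v, Relation.ReflTransGen A root v := by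
  have key : ∀ n v, f v < n → Relation.ReflTransGen A root v := by
    intro n
    induction n with
    | zero => intro v hv; omega
    | succ n ih =>
      intro v hv
      by_cases h : v = root
      · subst h; exact Relation.ReflTransGen.refl
      · obtain ⟨u, hu⟩ := hp v h
        exact (ih u (by have := hf u v hu; omega)).tail hu
  intro v; exact key (f v + 1) v (by omega)

lemma outDeg_eq_card {V : Type*} [Fintype V] [DecidableEq V] (A : V → V → Prop)
    [DecidableRel A] (v : V) :
    outDeg A v = (Finset.univ.filter (fun u => A v u)).card := by
  rw [outDeg, ← Set.ncard_coe_finset]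
  congr 1
  ext u
  simp

lemma inDeg_eq_card {V : Type*} [Fintype V] [DecidableEq V] (A : V → V → Prop)
    [DecidableRel A] (v : V) :
    inDeg A v = (Finset.univ.filter (fun u => A u v)).card := by
  rw [inDeg, ← Set.ncard_coe_finset]
  congr 1
  ext u
  simp

/-- Arcs of the (non-tree-based) binary network `N'` on 15 vertices. -/
def arcsB : List (ℕ × ℕ) :=
  [(0,1),(0,2),(1,3),(1,4),(2,5),(2,6),(3,7),(3,10),(4,7),(4,11),
   (5,8),(5,12),(6,8),(6,13),(7,9),(8,9),(9,14)]

/-- Arc relation of `N'`. -/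
def ArcB : Fin 15 → Fin 15 → Prop := fun u v => (u.val, v.val) ∈ arcsB

instance : DecidableRel ArcB := fun u v => by unfold ArcB; infer_instance

/-- Arcs of the (tree-based) network `N` on 13 vertices. -/
def arcsN : List (ℕ × ℕ) :=
  [(0,1),(0,2),(1,3),(1,4),(2,5),(2,6),(3,7),(3,8),(4,7),(4,9),
   (5,7),(5,10),(6,7),(6,11),(7,12)]

/-- Arc relation of `N`. -/
def ArcN : Fin 13 → Fin 13 → Prop := fun u v => (u.val, v.val) ∈ arcsN

instance : DecidableRel ArcN := fun u v => by unfold ArcN; infer_instance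

/-- The support tree of `N`. -/
def arcsT : List (ℕ × ℕ) :=
  [(0,1),(0,2),(1,3),(1,4),(2,5),(2,6),(3,7),(3,8),(4,9),
   (5,10),(6,11),(7,12)]

def ArcT : Fin 13 → Fin 13 → Prop := fun u v => (u.val, v.val) ∈ arcsT

instance : DecidableRel ArcT := fun u v => by unfold ArcT; infer_instance

/-- Rank function for `N'`. -/
def rankB : Fin 15 → ℕ :=
  fun v => [0,1,1,2,2,2,2,3,3,4,3,3,3,3,5].getD v.val 0

/-- Rank function for `N`. -/
def rankN : Fin 13 → ℕ :=
  fun v => [0,1,1,2,2,2,2,3,3,3,3,3,4].getD v.val 0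

/-- The contraction map. -/
def phi : Fin 15 → Fin 13 := fun v =>
  if h : v.val ≤ 7 then ⟨v.val, by omega⟩
  else if h2 : v.val ≤ 9 then ⟨7, by omega⟩
  else ⟨v.val - 2, by omega⟩

/-- The contraction adjacency-or-equality relation on fibers. -/
def RelC : Fin 15 → Fin 15 → Prop := fun x y => (ArcB x y ∨ ArcB y x) ∧ phi x = phi y

/-- The network `N`. -/
def netN : PhyloNet (Fin 13) where
  Arc := ArcN
  root := 0
  X := {8,9,10,11,12}
  acyclic := acyclic_of_rank ArcN rankN (by decide)
  reach := reach_of_rank ArcN 0 rankN (by decide) (by decide)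
  root_out := by rw [outDeg_eq_card]; decide
  leaf_iff := by intro v; rw [outDeg_eq_card]; revert v; decide
  leaf_in := by intro v hv; rw [inDeg_eq_card]; revert hv; revert v; decide
  internal := by
    intro v h1 h2
    simp only [inDeg_eq_card, outDeg_eq_card]
    revert h2; revert h1; revert v; decide

/-- The binary network `N'`. -/
def netB : PhyloNet (Fin 15) where
  Arc := ArcB
  root := 0
  X := {10,11,12,13,14}
  acyclic := acyclic_of_rank ArcB rankB (by decide)
  reach := reach_of_rank ArcB 0 rankB (by decide) (by decide)
  root_out := by rw [outDeg_eq_card]; decide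
  leaf_iff := by intro v; rw [outDeg_eq_card]; revert v; decide
  leaf_in := by intro v hv; rw [inDeg_eq_card]; revert hv; revert v; decide
  internal := by
    intro v h1 h2
    simp only [inDeg_eq_card, outDeg_eq_card]
    revert h2; revert h1; revert v; decide

end Stmt10Aux

/-- there is a tree-based network having a binary refinement that is
not tree-based. -/
theorem stmt10 :
    ∃ (V : Type) (i1 : Fintype V) (i2 : DecidableEq V) (N : @PhyloNet V i1 i2),
      @TreeBased V i1 i2 N ∧
      ∃ (V' : Type) (j1 : Fintype V') (j2 : DecidableEq V')
        (N' : @PhyloNet V' j1 j2) (φ : V' → V),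
        @IsBinRefinement V i1 i2 V' j1 j2 N' N φ ∧ ¬ @TreeBased V' j1 j2 N' := by
  refine ⟨Fin 13, inferInstance, inferInstance, netN, ?_, Fin 15, inferInstance,
    inferInstance, netB, phi, ?_, ?_⟩
  · -- N is tree-based
    refine ⟨ArcT, ⟨⟨?_, ?_, ?_⟩, ?_⟩⟩
    · intro u v h
      revert h; revert v; revert u
      show ∀ u v, ArcT u v → ArcN u v
      decide
    · intro v
      rw [inDeg_eq_card]
      revert v
      show ∀ v : Fin 13, (Finset.univ.filter (fun u => ArcT u v)).card = 0 ↔ v = 0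
      decide
    · intro v hv
      rw [inDeg_eq_card]
      revert hv; revert v
      show ∀ v : Fin 13, v ≠ (0 : Fin 13) →
        (Finset.univ.filter (fun u => ArcT u v)).card = 1
      decide
    · intro v hv
      rw [outDeg_eq_card] at hv
      revert hv; revert v
      show ∀ v : Fin 13, (Finset.univ.filter (fun u => ArcT v u)).card = 0 →
        v ∈ ({8,9,10,11,12} : Finset (Fin 13))
      decide
  · -- binary refinement
    refine ⟨?_, ?_, ?_, ?_, ?_, ?_, ?_⟩
    · intro v
      show inDeg ArcB v ≤ 2 ∧ outDeg ArcB v ≤ 2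
      rw [inDeg_eq_card, outDeg_eq_card]
      revert v; decide
    · show Function.Surjective phi
      decide
    · rfl
    · decide
    · have h : ∀ a ∈ netB.X, ∀ b ∈ netB.X, phi a = phi b → a = b := by decide
      intro a ha b hb hab
      exact h a (Finset.mem_coe.mp ha) b (Finset.mem_coe.mp hb) hab
    · show ∀ u v : Fin 13, ArcN u v ↔
        ∃ u' v', phi u' = u ∧ phi v' = v ∧ ArcB u' v' ∧ phi u' ≠ phi v'
      decide
    · intro a b hab
      show Relation.ReflTransGen RelC a b
      have key : ∀ a b : Fin 15, phi a = phi b → a = b ∨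
          ((a = 7 ∨ a = 8 ∨ a = 9) ∧ (b = 7 ∨ b = 8 ∨ b = 9)) := by decide
      have s79 : RelC 7 9 := ⟨Or.inl (by decide), by decide⟩
      have s97 : RelC 9 7 := ⟨Or.inr (by decide), by decide⟩
      have s89 : RelC 8 9 := ⟨Or.inl (by decide), by decide⟩
      have s98 : RelC 9 8 := ⟨Or.inr (by decide), by decide⟩
      rcases key a b hab with rfl | ⟨ha, hb⟩
      · exact Relation.ReflTransGen.refl
      · rcases ha with rfl | rfl | rfl <;> rcases hb with rfl | rfl | rfl
        · exact Relation.ReflTransGen.refl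
        · exact (Relation.ReflTransGen.single s79).tail s98
        · exact Relation.ReflTransGen.single s79
        · exact (Relation.ReflTransGen.single s89).tail s97
        · exact Relation.ReflTransGen.refl
        · exact Relation.ReflTransGen.single s89
        · exact Relation.ReflTransGen.single s97
        · exact Relation.ReflTransGen.single s98
        · exact Relation.ReflTransGen.refl
  · -- N' is not tree-based
    rintro ⟨T, ⟨⟨hsub, _, hone⟩, hleaf⟩⟩
    -- vertex 7 has an outgoing tree arc, necessarily to 9
    have h7 : outDeg T 7 ≠ 0 := by
      intro h
      have := hleaf 7 h
      revert this; decide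
    have h8 : outDeg T 8 ≠ 0 := by
      intro h
      have := hleaf 8 h
      revert this; decide
    obtain ⟨u7, hu7⟩ := Set.nonempty_of_ncard_ne_zero h7
    obtain ⟨u8, hu8⟩ := Set.nonempty_of_ncard_ne_zero h8
    have harc7 : ∀ u : Fin 15, ArcB 7 u → u = 9 := by decide
    have harc8 : ∀ u : Fin 15, ArcB 8 u → u = 9 := by decide
    have e7 : u7 = 9 := harc7 u7 (hsub _ _ hu7)
    have e8 : u8 = 9 := harc8 u8 (hsub _ _ hu8)
    subst e7; subst e8
    have hone9 : inDeg T 9 = 1 := hone 9 (by decide)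
    have hsubset : ({7, 8} : Set (Fin 15)) ⊆ {u | T u 9} := by
      rintro u (rfl | rfl)
      · exact hu7
      · exact hu8
    have h2le : 2 ≤ inDeg T 9 := by
      have := Set.ncard_le_ncard hsubset (Set.toFinite _)
      rwa [Set.ncard_pair (by decide : (7 : Fin 15) ≠ 8)] at this
    omega
end
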